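/- arXiv:2507.15612 — 3 statements merged into one kernel-verified Lean document; each statement's English description precedes it below -/
import Mathlib

section
/- The influence function is exactly unbiased for h(β,P) when the nuisance pair (δ, π₁) is correctly specified: if in the candidate nuisance functions one sets δ̄ = δ (the true ratio (μ₁−μ₀)/(λ₁−λ₀)) and π̄₁ = π₁ (the true instrument propensity), while ρ̄, λ̄₀, λ̄₁, μ̄₀, μ̄₁ are arbitrary, then the second-order remainder R(P̄,P) = h(β,P̄) − h(β,P) + E_P[ḣ(β,O,P̄)] equals zero. -/
open MeasureTheory

private lemma int_bdd {Ω : Type*} [MeasurableSpace Ω] {P : Measure Ω} [IsFiniteMeasure P]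
    {f : Ω → ℝ} (hf : Measurable f) (C : ℝ) (h : ∀ ω, |f ω| ≤ C) : Integrable f P :=
  ⟨hf.aestronglyMeasurable, HasFiniteIntegral.of_bounded (C := C)
    (Filter.Eventually.of_forall (fun ω => by simpa [Real.norm_eq_abs] using h ω))⟩

private lemma key_mul {Ω : Type*} [m0 : MeasurableSpace Ω] {P : Measure Ω} [IsProbabilityMeasure P]
    {m : MeasurableSpace Ω} (hm : m ≤ m0) {φ g G : Ω → ℝ}
    (hφ : Measurable[m] φ)
    (hφg : Integrable (fun ω => φ ω * g ω) P) (hg : Integrable g P)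
    (hG : P[g|m] =ᵐ[P] G) :
    ∫ ω, φ ω * g ω ∂P = ∫ ω, φ ω * G ω ∂P := by
  have h1 : ∫ ω, (P[fun ω => φ ω * g ω|m]) ω ∂P = ∫ ω, φ ω * g ω ∂P :=
    integral_condExp hm
  have h2 : P[fun ω => φ ω * g ω|m] =ᵐ[P] fun ω => φ ω * G ω := by
    have h3 := condExp_mul_of_stronglyMeasurable_left (μ := P) hφ.stronglyMeasurable hφg hg
    filter_upwards [h3, hG] with ω h3ω hGω
    simp [hGω] at h3ω
    exact h3ω
  rw [← h1]
  exact integral_congr_ae h2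

private lemma abs_mul_le' {a b A B : ℝ} (ha : |a| ≤ A) (hb : |b| ≤ B) : |a * b| ≤ A * B := by
  rw [abs_mul]
  exact mul_le_mul ha hb (abs_nonneg _) ((abs_nonneg a).trans ha)

private lemma abs_div_le' {a b A c : ℝ} (ha : |a| ≤ A) (hc : 0 < c) (hb : c ≤ |b|) :
    |a / b| ≤ A / c := by
  rw [abs_div]
  exact div_le_div₀ ((abs_nonneg a).trans ha) ha hc hb

private lemma abs_sub_le'' {a b A B : ℝ} (ha : |a| ≤ A) (hb : |b| ≤ B) : |a - b| ≤ A + B := by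
  calc |a - b| ≤ |a| + |b| := abs_sub a b
    _ ≤ A + B := add_le_add ha hb

/-- The influence function is exactly unbiased for `h(β,P)` when the nuisance
pair `(δ, π₁)` is correctly specified: if `δ̄ = δ` and `π̄₁ = π₁`, while `ρ̄, λ̄₀, λ̄₁, μ̄₀, μ̄₁`
are arbitrary, then the second-order remainder
`R(P̄,P) = h(β,P̄) − h(β,P) + E_P[ḣ(β,O,P̄)]` equals zero. -/
theorem stmt5
    {Ω 𝒳 : Type*} [MeasurableSpace Ω] [MeasurableSpace 𝒳]
    (P : Measure Ω) [IsProbabilityMeasure P]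
    (X : Ω → 𝒳) (Z A Y : Ω → ℝ)
    (hX : Measurable X) (hZ : Measurable Z) (hA : Measurable A) (hY : Measurable Y)
    (hZ01 : ∀ ω, Z ω = 0 ∨ Z ω = 1) (hA01 : ∀ ω, A ω = 0 ∨ A ω = 1)
    (M : ℝ → ℝ) (hMmeas : Measurable M) (hMbdd : ∃ C, ∀ y, |M y| ≤ C)
    -- true nuisance functions (versions of the conditional expectations)
    (π₁ ρ : 𝒳 → ℝ) (μ lam : ℝ → 𝒳 → ℝ)
    (hπmeas : Measurable π₁) (hρmeas : Measurable ρ)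
    (hμmeas : ∀ z, Measurable (μ z)) (hlammeas : ∀ z, Measurable (lam z))
    (hπ : P[Z | MeasurableSpace.comap X inferInstance] =ᵐ[P] fun ω => π₁ (X ω))
    (hρ : P[A | MeasurableSpace.comap X inferInstance] =ᵐ[P] fun ω => ρ (X ω))
    (hμ : P[(fun ω => M (Y ω) * (1 - A ω)) |
        MeasurableSpace.comap (fun ω => (Z ω, X ω)) inferInstance]
      =ᵐ[P] fun ω => μ (Z ω) (X ω))
    (hlam : P[A | MeasurableSpace.comap (fun ω => (Z ω, X ω)) inferInstance]
      =ᵐ[P] fun ω => lam (Z ω) (X ω))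
    -- candidate (possibly misspecified) nuisance functions
    (π₁b ρb : 𝒳 → ℝ) (μb lamb : ℝ → 𝒳 → ℝ)
    (hπbmeas : Measurable π₁b) (hρbmeas : Measurable ρb)
    (hμbmeas : ∀ z, Measurable (μb z)) (hlambmeas : ∀ z, Measurable (lamb z))
    -- regularity: denominators bounded away from zero, nuisances bounded
    (c : ℝ) (hc : 0 < c)
    (hπbd : ∀ x, c ≤ π₁ x ∧ π₁ x ≤ 1 - c) (hπbbd : ∀ x, c ≤ π₁b x ∧ π₁b x ≤ 1 - c)
    (hδA : ∀ x, c ≤ |lam 1 x - lam 0 x|) (hδAb : ∀ x, c ≤ |lamb 1 x - lamb 0 x|)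
    (hnuisbd : ∃ C, ∀ z x, |μ z x| ≤ C ∧ |lam z x| ≤ C ∧ |ρ x| ≤ C ∧
      |μb z x| ≤ C ∧ |lamb z x| ≤ C ∧ |ρb x| ≤ C)
    -- the number `h(β,P̄)` computed under the candidate distribution
    (hPbar : ℝ)
    -- correct specification of δ and π₁
    (hδcorrect : ∀ᵐ ω ∂P,
      (μb 1 (X ω) - μb 0 (X ω)) / (lamb 1 (X ω) - lamb 0 (X ω))
        = (μ 1 (X ω) - μ 0 (X ω)) / (lam 1 (X ω) - lam 0 (X ω)))
    (hπcorrect : ∀ᵐ ω ∂P, π₁b (X ω) = π₁ (X ω)) :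
    hPbar
      - (∫ ω, ((μ 1 (X ω) - μ 0 (X ω)) / (lam 1 (X ω) - lam 0 (X ω))) * ρ (X ω) ∂P)
      + (∫ ω,
          (((μb 1 (X ω) - μb 0 (X ω)) / (lamb 1 (X ω) - lamb 0 (X ω))) * A ω - hPbar)
            + (ρb (X ω) / (lamb 1 (X ω) - lamb 0 (X ω)))
                * ((2 * Z ω - 1) / (Z ω * π₁b (X ω) + (1 - Z ω) * (1 - π₁b (X ω))))
                * (M (Y ω) * (1 - A ω)
                    - (Z ω * μb 1 (X ω) + (1 - Z ω) * μb 0 (X ω))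
                    - (A ω - (Z ω * lamb 1 (X ω) + (1 - Z ω) * lamb 0 (X ω)))
                        * ((μb 1 (X ω) - μb 0 (X ω)) / (lamb 1 (X ω) - lamb 0 (X ω)))) ∂P)
      = 0 := by
  classical
  obtain ⟨Cm, hCm⟩ := hMbdd
  obtain ⟨C0, hC0⟩ := hnuisbd
  set C := max (max C0 Cm) 1 with hCdef
  have hC1 : (1:ℝ) ≤ C := le_max_right _ _
  have hC0le : C0 ≤ C := le_trans (le_max_left _ _) (le_max_left _ _)
  have hCmle : Cm ≤ C := le_trans (le_max_right _ _) (le_max_left _ _)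
  have hμbd : ∀ z x, |μ z x| ≤ C := fun z x => (hC0 z x).1.trans hC0le
  have hlambd : ∀ z x, |lam z x| ≤ C := fun z x => (hC0 z x).2.1.trans hC0le
  have hρbd : ∀ x, |ρ x| ≤ C := fun x => ((hC0 0 x).2.2.1).trans hC0le
  have hμbbd : ∀ z x, |μb z x| ≤ C := fun z x => (hC0 z x).2.2.2.1.trans hC0le
  have hlambbd : ∀ z x, |lamb z x| ≤ C := fun z x => (hC0 z x).2.2.2.2.1.trans hC0le
  have hρbbd : ∀ x, |ρb x| ≤ C := fun x => ((hC0 0 x).2.2.2.2.2).trans hC0le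
  have hMb : ∀ y, |M y| ≤ C := fun y => (hCm y).trans hCmle
  -- named functions
  set D : 𝒳 → ℝ := fun x => (μ 1 x - μ 0 x) / (lam 1 x - lam 0 x) with hDdef
  set u : 𝒳 → ℝ := fun x => ρb x / (lamb 1 x - lamb 0 x) with hudef
  set W : Ω → ℝ :=
    fun ω => (2 * Z ω - 1) / (Z ω * π₁ (X ω) + (1 - Z ω) * (1 - π₁ (X ω))) with hWdef
  set E : Ω → ℝ := fun ω => M (Y ω) * (1 - A ω)
      - (Z ω * μb 1 (X ω) + (1 - Z ω) * μb 0 (X ω))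
      - (A ω - (Z ω * lamb 1 (X ω) + (1 - Z ω) * lamb 0 (X ω))) * D (X ω) with hEdef
  -- simple bounds
  have hAb : ∀ ω, |A ω| ≤ 1 := fun ω => by rcases hA01 ω with h | h <;> rw [h] <;> norm_num
  have hZb : ∀ ω, |Z ω| ≤ 1 := fun ω => by rcases hZ01 ω with h | h <;> rw [h] <;> norm_num
  have h1Ab : ∀ ω, |1 - A ω| ≤ 1 := fun ω => by rcases hA01 ω with h | h <;> rw [h] <;> norm_num
  have h1Zb : ∀ ω, |1 - Z ω| ≤ 1 := fun ω => by rcases hZ01 ω with h | h <;> rw [h] <;> norm_num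
  have hDb : ∀ x, |D x| ≤ (C + C) / c := fun x =>
    abs_div_le' (abs_sub_le'' (hμbd 1 x) (hμbd 0 x)) hc (hδA x)
  have hub : ∀ x, |u x| ≤ C / c := fun x => abs_div_le' (hρbbd x) hc (hδAb x)
  have hWb : ∀ ω, |W ω| ≤ 1 / c := by
    intro ω
    have hnum : |2 * Z ω - 1| ≤ 1 := by rcases hZ01 ω with h | h <;> rw [h] <;> norm_num
    have hden : c ≤ |Z ω * π₁ (X ω) + (1 - Z ω) * (1 - π₁ (X ω))| := by
      rcases hZ01 ω with h | h <;> rw [h]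
      · have h2 := (hπbd (X ω)).2
        have : (0:ℝ) * π₁ (X ω) + (1 - 0) * (1 - π₁ (X ω)) = 1 - π₁ (X ω) := by ring
        rw [this, abs_of_nonneg (by linarith)]; linarith
      · have h1 := (hπbd (X ω)).1
        have : (1:ℝ) * π₁ (X ω) + (1 - 1) * (1 - π₁ (X ω)) = π₁ (X ω) := by ring
        rw [this, abs_of_nonneg (by linarith)]; linarith
    exact abs_div_le' hnum hc hden
  have hμbarb : ∀ ω, |Z ω * μb 1 (X ω) + (1 - Z ω) * μb 0 (X ω)| ≤ C := by
    intro ω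
    rcases hZ01 ω with h | h <;> rw [h] <;> simp <;> [exact hμbbd 0 (X ω); exact hμbbd 1 (X ω)]
  have hlambarb : ∀ ω, |Z ω * lamb 1 (X ω) + (1 - Z ω) * lamb 0 (X ω)| ≤ C := by
    intro ω
    rcases hZ01 ω with h | h <;> rw [h] <;> simp <;>
      [exact hlambbd 0 (X ω); exact hlambbd 1 (X ω)]
  have hμtrueb : ∀ ω, |Z ω * μ 1 (X ω) + (1 - Z ω) * μ 0 (X ω)| ≤ C := by
    intro ω
    rcases hZ01 ω with h | h <;> rw [h] <;> simp <;> [exact hμbd 0 (X ω); exact hμbd 1 (X ω)]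
  have hlamtrueb : ∀ ω, |Z ω * lam 1 (X ω) + (1 - Z ω) * lam 0 (X ω)| ≤ C := by
    intro ω
    rcases hZ01 ω with h | h <;> rw [h] <;> simp <;>
      [exact hlambd 0 (X ω); exact hlambd 1 (X ω)]
  have hEb : ∀ ω, |E ω| ≤ C * 1 + C + (1 + C) * ((C + C) / c) := fun ω =>
    abs_sub_le'' (abs_sub_le'' (abs_mul_le' (hMb _) (h1Ab ω)) (hμbarb ω))
      (abs_mul_le' (abs_sub_le'' (hAb ω) (hlambarb ω)) (hDb (X ω)))
  -- measurability
  have hDm : Measurable D := ((hμmeas 1).sub (hμmeas 0)).div ((hlammeas 1).sub (hlammeas 0))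
  have hum : Measurable u := hρbmeas.div ((hlambmeas 1).sub (hlambmeas 0))
  have hWm : Measurable W := by
    apply Measurable.div
    · exact (measurable_const.mul hZ).sub measurable_const
    · exact (hZ.mul (hπmeas.comp hX)).add
        ((measurable_const.sub hZ).mul (measurable_const.sub (hπmeas.comp hX)))
  have hEm : Measurable E := by
    apply Measurable.sub
    · exact ((hMmeas.comp hY).mul (measurable_const.sub hA)).sub
        ((hZ.mul ((hμbmeas 1).comp hX)).add
          ((measurable_const.sub hZ).mul ((hμbmeas 0).comp hX)))
    · exact (hA.sub ((hZ.mul ((hlambmeas 1).comp hX)).add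
        ((measurable_const.sub hZ).mul ((hlambmeas 0).comp hX)))).mul (hDm.comp hX)
  -- sigma-algebras
  have hm₁ : MeasurableSpace.comap X inferInstance ≤ (inferInstance : MeasurableSpace Ω) :=
    hX.comap_le
  have hm₂ : MeasurableSpace.comap (fun ω => (Z ω, X ω)) inferInstance
      ≤ (inferInstance : MeasurableSpace Ω) := (hZ.prodMk hX).comap_le
  have hXm1 : Measurable[MeasurableSpace.comap X inferInstance] X :=
    measurable_iff_comap_le.mpr le_rfl
  have hZXm2 : Measurable[MeasurableSpace.comap (fun ω => (Z ω, X ω)) inferInstance]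
      (fun ω => (Z ω, X ω)) := measurable_iff_comap_le.mpr le_rfl
  have hXm2 : Measurable[MeasurableSpace.comap (fun ω => (Z ω, X ω)) inferInstance] X :=
    measurable_snd.comp hZXm2
  have hZm2 : Measurable[MeasurableSpace.comap (fun ω => (Z ω, X ω)) inferInstance] Z :=
    measurable_fst.comp hZXm2
  have hWm2 : Measurable[MeasurableSpace.comap (fun ω => (Z ω, X ω)) inferInstance] W := by
    apply Measurable.div
    · exact (measurable_const.mul hZm2).sub measurable_const
    · exact (hZm2.mul (hπmeas.comp hXm2)).add
        ((measurable_const.sub hZm2).mul (measurable_const.sub (hπmeas.comp hXm2)))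
  -- Step 1: first conditional-expectation identity : ∫ D(X) A = ∫ D(X) ρ(X)
  have key1 : ∫ ω, D (X ω) * A ω ∂P = ∫ ω, D (X ω) * ρ (X ω) ∂P := by
    refine key_mul hm₁ (hDm.comp hXm1) ?_ (int_bdd hA 1 hAb) hρ
    exact int_bdd ((hDm.comp hX).mul hA) (((C + C) / c) * 1)
      (fun ω => abs_mul_le' (hDb (X ω)) (hAb ω))
  -- integrabilities
  have hUWm : Measurable (fun ω => u (X ω) * W ω) := (hum.comp hX).mul hWm
  have hUWb : ∀ ω, |u (X ω) * W ω| ≤ C / c * (1 / c) :=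
    fun ω => abs_mul_le' (hub (X ω)) (hWb ω)
  have intDA : Integrable (fun ω => D (X ω) * A ω) P :=
    int_bdd ((hDm.comp hX).mul hA) (((C + C) / c) * 1)
      (fun ω => abs_mul_le' (hDb (X ω)) (hAb ω))
  have intA : Integrable A P := int_bdd hA 1 hAb
  have intUWE : Integrable (fun ω => u (X ω) * W ω * E ω) P :=
    int_bdd (hUWm.mul hEm)
      ((C / c * (1 / c)) * (C * 1 + C + (1 + C) * ((C + C) / c)))
      (fun ω => abs_mul_le' (hUWb ω) (hEb ω))
  have hmubarm : Measurable (fun ω => Z ω * μb 1 (X ω) + (1 - Z ω) * μb 0 (X ω)) :=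
    (hZ.mul ((hμbmeas 1).comp hX)).add ((measurable_const.sub hZ).mul ((hμbmeas 0).comp hX))
  have hlambarm : Measurable (fun ω => Z ω * lamb 1 (X ω) + (1 - Z ω) * lamb 0 (X ω)) :=
    (hZ.mul ((hlambmeas 1).comp hX)).add ((measurable_const.sub hZ).mul ((hlambmeas 0).comp hX))
  have hmutruem : Measurable (fun ω => Z ω * μ 1 (X ω) + (1 - Z ω) * μ 0 (X ω)) :=
    (hZ.mul ((hμmeas 1).comp hX)).add ((measurable_const.sub hZ).mul ((hμmeas 0).comp hX))
  have hlamtruem : Measurable (fun ω => Z ω * lam 1 (X ω) + (1 - Z ω) * lam 0 (X ω)) :=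
    (hZ.mul ((hlammeas 1).comp hX)).add ((measurable_const.sub hZ).mul ((hlammeas 0).comp hX))
  have intM1A : Integrable (fun ω => M (Y ω) * (1 - A ω)) P :=
    int_bdd ((hMmeas.comp hY).mul (measurable_const.sub hA)) (C * 1)
      (fun ω => abs_mul_le' (hMb (Y ω)) (h1Ab ω))
  have intUW_M : Integrable (fun ω => (u (X ω) * W ω) * (M (Y ω) * (1 - A ω))) P :=
    int_bdd (hUWm.mul ((hMmeas.comp hY).mul (measurable_const.sub hA)))
      ((C / c * (1 / c)) * (C * 1))
      (fun ω => abs_mul_le' (hUWb ω) (abs_mul_le' (hMb (Y ω)) (h1Ab ω)))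
  have intUW_mub : Integrable
      (fun ω => (u (X ω) * W ω) * (Z ω * μb 1 (X ω) + (1 - Z ω) * μb 0 (X ω))) P :=
    int_bdd (hUWm.mul hmubarm) ((C / c * (1 / c)) * C)
      (fun ω => abs_mul_le' (hUWb ω) (hμbarb ω))
  have intUW_mutrue : Integrable
      (fun ω => (u (X ω) * W ω) * (Z ω * μ 1 (X ω) + (1 - Z ω) * μ 0 (X ω))) P :=
    int_bdd (hUWm.mul hmutruem) ((C / c * (1 / c)) * C)
      (fun ω => abs_mul_le' (hUWb ω) (hμtrueb ω))
  have intUWD_A : Integrable (fun ω => (u (X ω) * W ω * D (X ω)) * A ω) P :=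
    int_bdd ((hUWm.mul (hDm.comp hX)).mul hA) ((C / c * (1 / c) * ((C + C) / c)) * 1)
      (fun ω => abs_mul_le' (abs_mul_le' (hUWb ω) (hDb (X ω))) (hAb ω))
  have intUWD_lamtrue : Integrable (fun ω => (u (X ω) * W ω * D (X ω))
      * (Z ω * lam 1 (X ω) + (1 - Z ω) * lam 0 (X ω))) P :=
    int_bdd ((hUWm.mul (hDm.comp hX)).mul hlamtruem) ((C / c * (1 / c) * ((C + C) / c)) * C)
      (fun ω => abs_mul_le' (abs_mul_le' (hUWb ω) (hDb (X ω))) (hlamtrueb ω))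
  have intUW_lambD : Integrable (fun ω => (u (X ω) * W ω)
      * ((Z ω * lamb 1 (X ω) + (1 - Z ω) * lamb 0 (X ω)) * D (X ω))) P :=
    int_bdd (hUWm.mul (hlambarm.mul (hDm.comp hX))) ((C / c * (1 / c)) * (C * ((C + C) / c)))
      (fun ω => abs_mul_le' (hUWb ω) (abs_mul_le' (hlambarb ω) (hDb (X ω))))
  -- Step A: decompose ∫ uWE
  have stepA : ∫ ω, u (X ω) * W ω * E ω ∂P
      = (∫ ω, (u (X ω) * W ω) * (M (Y ω) * (1 - A ω)) ∂P)
        - (∫ ω, (u (X ω) * W ω) * (Z ω * μb 1 (X ω) + (1 - Z ω) * μb 0 (X ω)) ∂P)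
        - ((∫ ω, (u (X ω) * W ω * D (X ω)) * A ω ∂P)
            - ∫ ω, (u (X ω) * W ω)
                * ((Z ω * lamb 1 (X ω) + (1 - Z ω) * lamb 0 (X ω)) * D (X ω)) ∂P) := by
    have e1 : (fun ω => u (X ω) * W ω * E ω)
        = fun ω => (u (X ω) * W ω * (M (Y ω) * (1 - A ω))
            - u (X ω) * W ω * (Z ω * μb 1 (X ω) + (1 - Z ω) * μb 0 (X ω)))
          - (u (X ω) * W ω * D (X ω) * A ω
            - u (X ω) * W ω * ((Z ω * lamb 1 (X ω) + (1 - Z ω) * lamb 0 (X ω)) * D (X ω))) := by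
      funext ω; simp only [hEdef]; ring
    have intL : Integrable (fun ω => u (X ω) * W ω * (M (Y ω) * (1 - A ω))
        - u (X ω) * W ω * (Z ω * μb 1 (X ω) + (1 - Z ω) * μb 0 (X ω))) P :=
      intUW_M.sub intUW_mub
    have intR : Integrable (fun ω => u (X ω) * W ω * D (X ω) * A ω
        - u (X ω) * W ω * ((Z ω * lamb 1 (X ω) + (1 - Z ω) * lamb 0 (X ω)) * D (X ω))) P :=
      intUWD_A.sub intUW_lambD
    rw [e1, integral_sub intL intR,
      integral_sub intUW_M intUW_mub, integral_sub intUWD_A intUW_lambD]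
  -- Step B: conditional expectation given (Z, X)
  have hB1 : ∫ ω, (u (X ω) * W ω) * (M (Y ω) * (1 - A ω)) ∂P
      = ∫ ω, (u (X ω) * W ω) * (μ (Z ω) (X ω)) ∂P :=
    key_mul hm₂ ((hum.comp hXm2).mul hWm2) intUW_M intM1A hμ
  have hB1' : ∫ ω, (u (X ω) * W ω) * (μ (Z ω) (X ω)) ∂P
      = ∫ ω, (u (X ω) * W ω) * (Z ω * μ 1 (X ω) + (1 - Z ω) * μ 0 (X ω)) ∂P := by
    refine integral_congr_ae (Filter.Eventually.of_forall fun ω => ?_)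
    dsimp only
    rcases hZ01 ω with h | h <;> rw [h] <;> norm_num
  have hB2 : ∫ ω, (u (X ω) * W ω * D (X ω)) * A ω ∂P
      = ∫ ω, (u (X ω) * W ω * D (X ω)) * (lam (Z ω) (X ω)) ∂P :=
    key_mul hm₂ (((hum.comp hXm2).mul hWm2).mul (hDm.comp hXm2)) intUWD_A intA hlam
  have hB2' : ∫ ω, (u (X ω) * W ω * D (X ω)) * (lam (Z ω) (X ω)) ∂P
      = ∫ ω, (u (X ω) * W ω * D (X ω))
          * (Z ω * lam 1 (X ω) + (1 - Z ω) * lam 0 (X ω)) ∂P := by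
    refine integral_congr_ae (Filter.Eventually.of_forall fun ω => ?_)
    dsimp only
    rcases hZ01 ω with h | h <;> rw [h] <;> norm_num
  -- the conditional mean difference
  set F : Ω → ℝ := fun ω =>
      (Z ω * μ 1 (X ω) + (1 - Z ω) * μ 0 (X ω))
      - (Z ω * μb 1 (X ω) + (1 - Z ω) * μb 0 (X ω))
      - ((Z ω * lam 1 (X ω) + (1 - Z ω) * lam 0 (X ω))
          - (Z ω * lamb 1 (X ω) + (1 - Z ω) * lamb 0 (X ω))) * D (X ω) with hFdef
  have stepC : (∫ ω, (u (X ω) * W ω) * (Z ω * μ 1 (X ω) + (1 - Z ω) * μ 0 (X ω)) ∂P)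
      - (∫ ω, (u (X ω) * W ω) * (Z ω * μb 1 (X ω) + (1 - Z ω) * μb 0 (X ω)) ∂P)
      - ((∫ ω, (u (X ω) * W ω * D (X ω))
            * (Z ω * lam 1 (X ω) + (1 - Z ω) * lam 0 (X ω)) ∂P)
          - ∫ ω, (u (X ω) * W ω)
              * ((Z ω * lamb 1 (X ω) + (1 - Z ω) * lamb 0 (X ω)) * D (X ω)) ∂P)
      = ∫ ω, (u (X ω) * W ω) * F ω ∂P := by
    have e1 : (fun ω => (u (X ω) * W ω) * F ω)
        = fun ω => (u (X ω) * W ω * (Z ω * μ 1 (X ω) + (1 - Z ω) * μ 0 (X ω))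
            - u (X ω) * W ω * (Z ω * μb 1 (X ω) + (1 - Z ω) * μb 0 (X ω)))
          - (u (X ω) * W ω * D (X ω) * (Z ω * lam 1 (X ω) + (1 - Z ω) * lam 0 (X ω))
            - u (X ω) * W ω * ((Z ω * lamb 1 (X ω) + (1 - Z ω) * lamb 0 (X ω)) * D (X ω))) := by
      funext ω; simp only [hFdef]; ring
    have intL : Integrable (fun ω => u (X ω) * W ω * (Z ω * μ 1 (X ω) + (1 - Z ω) * μ 0 (X ω))
        - u (X ω) * W ω * (Z ω * μb 1 (X ω) + (1 - Z ω) * μb 0 (X ω))) P :=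
      intUW_mutrue.sub intUW_mub
    have intR : Integrable (fun ω =>
        u (X ω) * W ω * D (X ω) * (Z ω * lam 1 (X ω) + (1 - Z ω) * lam 0 (X ω))
        - u (X ω) * W ω * ((Z ω * lamb 1 (X ω) + (1 - Z ω) * lamb 0 (X ω)) * D (X ω))) P :=
      intUWD_lamtrue.sub intUW_lambD
    rw [e1, integral_sub intL intR,
      integral_sub intUW_mutrue intUW_mub, integral_sub intUWD_lamtrue intUW_lambD]
  -- the X-level functions a1, b1
  set a1 : 𝒳 → ℝ := fun x =>
      u x * (1 / π₁ x) * (μ 1 x - μb 1 x - (lam 1 x - lamb 1 x) * D x) with ha1def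
  set b1 : 𝒳 → ℝ := fun x =>
      u x * (-(1 / (1 - π₁ x))) * (μ 0 x - μb 0 x - (lam 0 x - lamb 0 x) * D x) with hb1def
  have ha1m : Measurable a1 := by
    rw [ha1def]
    exact (hum.mul (measurable_const.div hπmeas)).mul
      (((hμmeas 1).sub (hμbmeas 1)).sub (((hlammeas 1).sub (hlambmeas 1)).mul hDm))
  have hb1m : Measurable b1 := by
    rw [hb1def]
    exact (hum.mul (measurable_const.div (measurable_const.sub hπmeas)).neg).mul
      (((hμmeas 0).sub (hμbmeas 0)).sub (((hlammeas 0).sub (hlambmeas 0)).mul hDm))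
  have hπinv : ∀ x, |1 / π₁ x| ≤ 1 / c := fun x =>
    abs_div_le' (by norm_num) hc ((hπbd x).1.trans (le_abs_self _))
  have hπinv' : ∀ x, |(-(1 / (1 - π₁ x)))| ≤ 1 / c := by
    intro x
    rw [abs_neg]
    refine abs_div_le' (by norm_num) hc ?_
    have := (hπbd x).2
    have h1 : c ≤ 1 - π₁ x := by linarith
    exact h1.trans (le_abs_self _)
  have hT1 : ∀ x, |μ 1 x - μb 1 x - (lam 1 x - lamb 1 x) * D x|
      ≤ C + C + (C + C) * ((C + C) / c) := fun x =>
    abs_sub_le'' (abs_sub_le'' (hμbd 1 x) (hμbbd 1 x))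
      (abs_mul_le' (abs_sub_le'' (hlambd 1 x) (hlambbd 1 x)) (hDb x))
  have hT0 : ∀ x, |μ 0 x - μb 0 x - (lam 0 x - lamb 0 x) * D x|
      ≤ C + C + (C + C) * ((C + C) / c) := fun x =>
    abs_sub_le'' (abs_sub_le'' (hμbd 0 x) (hμbbd 0 x))
      (abs_mul_le' (abs_sub_le'' (hlambd 0 x) (hlambbd 0 x)) (hDb x))
  have ha1b : ∀ x, |a1 x| ≤ C / c * (1 / c) * (C + C + (C + C) * ((C + C) / c)) := by
    intro x
    rw [ha1def]
    exact abs_mul_le' (abs_mul_le' (hub x) (hπinv x)) (hT1 x)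
  have hb1b : ∀ x, |b1 x| ≤ C / c * (1 / c) * (C + C + (C + C) * ((C + C) / c)) := by
    intro x
    rw [hb1def]
    exact abs_mul_le' (abs_mul_le' (hub x) (hπinv' x)) (hT0 x)
  have hπ1b : ∀ x, |π₁ x| ≤ 1 := by
    intro x
    have h1 := (hπbd x).1
    have h2 := (hπbd x).2
    rw [abs_le]
    constructor <;> linarith
  have int_a1Z : Integrable (fun ω => a1 (X ω) * Z ω) P :=
    int_bdd ((ha1m.comp hX).mul hZ)
      ((C / c * (1 / c) * (C + C + (C + C) * ((C + C) / c))) * 1)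
      (fun ω => abs_mul_le' (ha1b (X ω)) (hZb ω))
  have int_b1 : Integrable (fun ω => b1 (X ω)) P :=
    int_bdd (hb1m.comp hX) (C / c * (1 / c) * (C + C + (C + C) * ((C + C) / c)))
      (fun ω => hb1b (X ω))
  have int_b1Z : Integrable (fun ω => b1 (X ω) * Z ω) P :=
    int_bdd ((hb1m.comp hX).mul hZ)
      ((C / c * (1 / c) * (C + C + (C + C) * ((C + C) / c))) * 1)
      (fun ω => abs_mul_le' (hb1b (X ω)) (hZb ω))
  have int_a1π : Integrable (fun ω => a1 (X ω) * π₁ (X ω)) P :=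
    int_bdd ((ha1m.comp hX).mul (hπmeas.comp hX))
      ((C / c * (1 / c) * (C + C + (C + C) * ((C + C) / c))) * 1)
      (fun ω => abs_mul_le' (ha1b (X ω)) (hπ1b (X ω)))
  have int_b1π : Integrable (fun ω => b1 (X ω) * π₁ (X ω)) P :=
    int_bdd ((hb1m.comp hX).mul (hπmeas.comp hX))
      ((C / c * (1 / c) * (C + C + (C + C) * ((C + C) / c))) * 1)
      (fun ω => abs_mul_le' (hb1b (X ω)) (hπ1b (X ω)))
  -- Step D : uW·F as a linear function of Z
  have stepD : ∫ ω, (u (X ω) * W ω) * F ω ∂P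
      = ∫ ω, (a1 (X ω) * Z ω + (b1 (X ω) - b1 (X ω) * Z ω)) ∂P := by
    refine integral_congr_ae (Filter.Eventually.of_forall fun ω => ?_)
    dsimp only
    have hπ0 : π₁ (X ω) ≠ 0 := ne_of_gt (lt_of_lt_of_le hc (hπbd (X ω)).1)
    have hπ1 : (1 : ℝ) - π₁ (X ω) ≠ 0 := by
      have := (hπbd (X ω)).2
      have h1 : c ≤ 1 - π₁ (X ω) := by linarith
      exact ne_of_gt (lt_of_lt_of_le hc h1)
    rcases hZ01 ω with h | h <;>
      simp only [hFdef, ha1def, hb1def, hWdef, h] <;> field_simp <;> ring_nf <;> field_simp <;> ring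
  -- Step E : split and compute via conditioning on X
  have stepE : ∫ ω, (a1 (X ω) * Z ω + (b1 (X ω) - b1 (X ω) * Z ω)) ∂P
      = (∫ ω, a1 (X ω) * Z ω ∂P)
        + ((∫ ω, b1 (X ω) ∂P) - ∫ ω, b1 (X ω) * Z ω ∂P) := by
    have intsub : Integrable (fun ω => b1 (X ω) - b1 (X ω) * Z ω) P := int_b1.sub int_b1Z
    rw [integral_add int_a1Z intsub, integral_sub int_b1 int_b1Z]
  have keyπa : ∫ ω, a1 (X ω) * Z ω ∂P = ∫ ω, a1 (X ω) * π₁ (X ω) ∂P := by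
    refine key_mul hm₁ (ha1m.comp hXm1) int_a1Z (int_bdd hZ 1 hZb) hπ
  have keyπb : ∫ ω, b1 (X ω) * Z ω ∂P = ∫ ω, b1 (X ω) * π₁ (X ω) ∂P := by
    refine key_mul hm₁ (hb1m.comp hXm1) int_b1Z (int_bdd hZ 1 hZb) hπ
  have stepF : (∫ ω, a1 (X ω) * π₁ (X ω) ∂P)
      + ((∫ ω, b1 (X ω) ∂P) - ∫ ω, b1 (X ω) * π₁ (X ω) ∂P)
      = ∫ ω, (a1 (X ω) * π₁ (X ω) + (b1 (X ω) - b1 (X ω) * π₁ (X ω))) ∂P := by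
    have intsub : Integrable (fun ω => b1 (X ω) - b1 (X ω) * π₁ (X ω)) P := int_b1.sub int_b1π
    rw [integral_add int_a1π intsub, integral_sub int_b1 int_b1π]
  -- Step G : the integrand vanishes a.e.
  have stepG : ∫ ω, (a1 (X ω) * π₁ (X ω) + (b1 (X ω) - b1 (X ω) * π₁ (X ω))) ∂P = 0 := by
    refine integral_eq_zero_of_ae ?_
    filter_upwards [hδcorrect] with ω hδω
    have hπ0 : π₁ (X ω) ≠ 0 := ne_of_gt (lt_of_lt_of_le hc (hπbd (X ω)).1)
    have hπ1 : (1 : ℝ) - π₁ (X ω) ≠ 0 := by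
      have := (hπbd (X ω)).2
      have h1 : c ≤ 1 - π₁ (X ω) := by linarith
      exact ne_of_gt (lt_of_lt_of_le hc h1)
    have hdA : lam 1 (X ω) - lam 0 (X ω) ≠ 0 :=
      abs_pos.mp (lt_of_lt_of_le hc (hδA (X ω)))
    have hdAb : lamb 1 (X ω) - lamb 0 (X ω) ≠ 0 :=
      abs_pos.mp (lt_of_lt_of_le hc (hδAb (X ω)))
    have h1 : μ 1 (X ω) - μ 0 (X ω) = D (X ω) * (lam 1 (X ω) - lam 0 (X ω)) := by
      rw [hDdef]
      field_simp
    have h2 : μb 1 (X ω) - μb 0 (X ω) = D (X ω) * (lamb 1 (X ω) - lamb 0 (X ω)) := by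
      have h3 : (μb 1 (X ω) - μb 0 (X ω)) / (lamb 1 (X ω) - lamb 0 (X ω)) = D (X ω) := by
        rw [hδω, hDdef]
      rw [← h3]
      field_simp
    have hcomb : a1 (X ω) * π₁ (X ω) + (b1 (X ω) - b1 (X ω) * π₁ (X ω))
        = u (X ω) * ((μ 1 (X ω) - μ 0 (X ω)) - (μb 1 (X ω) - μb 0 (X ω))
            - ((lam 1 (X ω) - lam 0 (X ω)) - (lamb 1 (X ω) - lamb 0 (X ω))) * D (X ω)) := by
      simp only [ha1def, hb1def]
      field_simp
      ring
    show a1 (X ω) * π₁ (X ω) + (b1 (X ω) - b1 (X ω) * π₁ (X ω)) = 0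
    rw [hcomb, h1, h2]
    ring
  -- assemble : the correction integral vanishes
  have key2 : ∫ ω, u (X ω) * W ω * E ω ∂P = 0 := by
    rw [stepA, hB1, hB1', hB2, hB2', stepC, stepD, stepE, keyπa, keyπb, stepF, stepG]
  -- Step H : identify the statement's integral
  have hI2 : (∫ ω,
          (((μb 1 (X ω) - μb 0 (X ω)) / (lamb 1 (X ω) - lamb 0 (X ω))) * A ω - hPbar)
            + (ρb (X ω) / (lamb 1 (X ω) - lamb 0 (X ω)))
                * ((2 * Z ω - 1) / (Z ω * π₁b (X ω) + (1 - Z ω) * (1 - π₁b (X ω))))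
                * (M (Y ω) * (1 - A ω)
                    - (Z ω * μb 1 (X ω) + (1 - Z ω) * μb 0 (X ω))
                    - (A ω - (Z ω * lamb 1 (X ω) + (1 - Z ω) * lamb 0 (X ω)))
                        * ((μb 1 (X ω) - μb 0 (X ω)) / (lamb 1 (X ω) - lamb 0 (X ω)))) ∂P)
      = ∫ ω, ((D (X ω) * A ω - hPbar) + u (X ω) * W ω * E ω) ∂P := by
    refine integral_congr_ae ?_
    filter_upwards [hδcorrect, hπcorrect] with ω h1 h2
    simp only [hDdef, hudef, hWdef, hEdef]
    rw [h1, h2]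
  have hsplit : ∫ ω, ((D (X ω) * A ω - hPbar) + u (X ω) * W ω * E ω) ∂P
      = (∫ ω, D (X ω) * A ω ∂P) - hPbar + ∫ ω, u (X ω) * W ω * E ω ∂P := by
    have intsub : Integrable (fun ω => D (X ω) * A ω - hPbar) P :=
      intDA.sub (integrable_const hPbar)
    rw [integral_add intsub intUWE,
      integral_sub intDA (integrable_const hPbar), integral_const]
    simp
  have hraw : (∫ ω, ((μ 1 (X ω) - μ 0 (X ω)) / (lam 1 (X ω) - lam 0 (X ω))) * ρ (X ω) ∂P)
      = ∫ ω, D (X ω) * ρ (X ω) ∂P := by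
    refine integral_congr_ae (Filter.Eventually.of_forall fun ω => ?_)
    simp only [hDdef]
  rw [hI2, hsplit, key1, key2, hraw]
  ring
end

section
/- The influence function is exactly unbiased when (δ, λ₀, μ₀) are correctly specified: if δ̄ = δ, λ̄₀ = λ₀, and μ̄₀ = μ₀ (with ρ̄, π̄₁, μ̄₁, λ̄₁ arbitrary), then the remainder R(P̄,P) = 0. The key algebraic identity is (μ̄₁−μ₁) − δ̄(λ̄₁−λ₁) = (μ̄₀−μ₀) + (δ̄−δ)(λ₁−λ̄₀) + δ(λ₀−λ̄₀). -/
open MeasureTheory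

/-- The influence function is exactly unbiased when `(δ, λ₀, μ₀)` are correctly
specified: if `δ̄ = δ`, `λ̄₀ = λ₀` and `μ̄₀ = μ₀` (with `ρ̄, π̄₁, μ̄₁, λ̄₁` arbitrary), then the
remainder `R(P̄,P) = 0`.  The key algebraic identity is
`(μ̄₁−μ₁) − δ̄(λ̄₁−λ₁) = (μ̄₀−μ₀) + (δ̄−δ)(λ₁−λ̄₀) + δ(λ₀−λ̄₀)`. -/
theorem stmt7
    {𝒳 : Type*} [MeasurableSpace 𝒳] (ν : Measure 𝒳) [IsProbabilityMeasure ν]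
    -- true and candidate nuisance functions
    (ρ π₁ lam0 lam1 μ0 μ1 ρb π₁b lam0b lam1b μ0b μ1b : 𝒳 → ℝ)
    (hmeas : ∀ g ∈ [ρ, π₁, lam0, lam1, μ0, μ1, ρb, π₁b, lam0b, lam1b, μ0b, μ1b], Measurable g)
    -- all denominators nonzero
    (hden : ∀ x, lam1 x - lam0 x ≠ 0 ∧ lam1b x - lam0b x ≠ 0 ∧ π₁b x ≠ 0 ∧ 1 - π₁b x ≠ 0)
    -- δ and δ̄
    (δ δb : 𝒳 → ℝ)
    (hδ : ∀ x, δ x = (μ1 x - μ0 x) / (lam1 x - lam0 x))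
    (hδb : ∀ x, δb x = (μ1b x - μ0b x) / (lam1b x - lam0b x))
    -- integrability of the remainder integrand
    (hint : Integrable (fun x =>
      (δb x - δ x) * ((ρb x / (lam1b x - lam0b x))
            * ((lam1b x - lam0b x) - (lam1 x - lam0 x)) - (ρb x - ρ x))
        + (ρb x / (lam1b x - lam0b x)) * (π₁b x - π₁ x)
            * (((μ1b x - μ1 x) - δb x * (lam1b x - lam1 x)) / π₁b x
              + ((μ0b x - μ0 x) - δb x * (lam0b x - lam0 x)) / (1 - π₁b x))) ν)
    -- correct specification of δ, λ₀ and μ₀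
    (hδeq : ∀ᵐ x ∂ν, δb x = δ x)
    (hlam0eq : ∀ᵐ x ∂ν, lam0b x = lam0 x)
    (hμ0eq : ∀ᵐ x ∂ν, μ0b x = μ0 x) :
    (∀ᵐ x ∂ν, (μ1b x - μ1 x) - δb x * (lam1b x - lam1 x)
        = (μ0b x - μ0 x) + (δb x - δ x) * (lam1 x - lam0b x) + δ x * (lam0 x - lam0b x)) ∧
    ∫ x,
      ((δb x - δ x) * ((ρb x / (lam1b x - lam0b x))
            * ((lam1b x - lam0b x) - (lam1 x - lam0 x)) - (ρb x - ρ x))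
        + (ρb x / (lam1b x - lam0b x)) * (π₁b x - π₁ x)
            * (((μ1b x - μ1 x) - δb x * (lam1b x - lam1 x)) / π₁b x
              + ((μ0b x - μ0 x) - δb x * (lam0b x - lam0 x)) / (1 - π₁b x))) ∂ν = 0 := by

  have key : ∀ x, (μ1b x - μ1 x) - δb x * (lam1b x - lam1 x)
      = (μ0b x - μ0 x) + (δb x - δ x) * (lam1 x - lam0b x) + δ x * (lam0 x - lam0b x) := by
    intro x
    have h1 : δ x * (lam1 x - lam0 x) = μ1 x - μ0 x := by
      rw [hδ x]; field_simp [(hden x).1]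
    have h2 : δb x * (lam1b x - lam0b x) = μ1b x - μ0b x := by
      rw [hδb x]; field_simp [(hden x).2.1]
    linarith [h1, h2]
  refine ⟨Filter.Eventually.of_forall key, ?_⟩
  rw [integral_eq_zero_of_ae ?_]
  filter_upwards [hδeq, hlam0eq, hμ0eq] with x h1 h2 h3
  have k := key x
  rw [h1, h2, h3] at k ⊢
  simp only [sub_self, zero_mul, mul_zero, zero_add] at k ⊢
  simp [k]
end

section
/- The efficient influence function has mean zero under the true distribution: E_P[ḣ(β,O,P)] = 0, where ḣ(β,O,P) = (δ(β,X)·A − h(β,P)) + (ρ(X)/δ^A(X))·((2Z−1)/π_Z(X))·(M(Y,β)(1−A) − μ_Z(β,X) − (A−λ_Z(X))·δ(β,X)) and h(β,P) = E_P[δ(β,X)·ρ(X)]. -/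
open MeasureTheory

lemma key_zero {Ω : Type*} [m0 : MeasurableSpace Ω] (P : Measure Ω) [IsProbabilityMeasure P]
    {m : MeasurableSpace Ω} (hm : m ≤ m0) {w f g : Ω → ℝ}
    (hw : StronglyMeasurable[m] w) (hwb : ∃ C, ∀ ω, ‖w ω‖ ≤ C)
    (hf : Integrable f P) (hg : P[f|m] =ᵐ[P] g) :
    ∫ ω, w ω * (f ω - g ω) ∂P = 0 := by
  haveI : SigmaFinite (P.trim hm) := by infer_instance
  have hgi : Integrable g P := integrable_condExp.congr hg
  have hwmeas : AEStronglyMeasurable[m0] w P := (hw.mono hm).aestronglyMeasurable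
  have hwf : Integrable (fun ω => w ω * f ω) P := hf.bdd_mul hwmeas (Filter.Eventually.of_forall hwb.choose_spec)
  have hwg : Integrable (fun ω => w ω * g ω) P := hgi.bdd_mul hwmeas (Filter.Eventually.of_forall hwb.choose_spec)
  have h1 : ∫ ω, w ω * f ω ∂P = ∫ ω, w ω * g ω ∂P := by
    rw [← integral_condExp hm (f := fun ω => w ω * f ω)]
    refine integral_congr_ae ?_
    refine (condExp_mul_of_stronglyMeasurable_left hw hwf hf).trans ?_
    filter_upwards [hg] with ω hω
    simp [hω]
  simp_rw [mul_sub]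
  rw [integral_sub hwf hwg, h1, sub_self]


/-- The efficient influence function has mean zero under the true
distribution: `E_P[ḣ(β,O,P)] = 0`, where
`ḣ(β,O,P) = (δ(β,X)·A − h(β,P)) + (ρ(X)/δ^A(X))·((2Z−1)/π_Z(X))·(M(Y,β)(1−A) − μ_Z(β,X)
  − (A−λ_Z(X))·δ(β,X))` and `h(β,P) = E_P[δ(β,X)·ρ(X)]`. -/
theorem stmt9
    {Ω 𝒳 : Type*} [MeasurableSpace Ω] [MeasurableSpace 𝒳]
    (P : Measure Ω) [IsProbabilityMeasure P]
    (X : Ω → 𝒳) (Z A Y : Ω → ℝ)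
    (hX : Measurable X) (hZ : Measurable Z) (hA : Measurable A) (hY : Measurable Y)
    (hZ01 : ∀ ω, Z ω = 0 ∨ Z ω = 1) (hA01 : ∀ ω, A ω = 0 ∨ A ω = 1)
    -- bounded measurable moment function (β fixed)
    (M : ℝ → ℝ) (hMmeas : Measurable M) (hMbdd : ∃ C, ∀ y, |M y| ≤ C)
    -- true nuisance functions (versions of the conditional expectations)
    (π₁ ρ : 𝒳 → ℝ) (μ lam : ℝ → 𝒳 → ℝ)
    (hπmeas : Measurable π₁) (hρmeas : Measurable ρ)
    (hμmeas : ∀ z, Measurable (μ z)) (hlammeas : ∀ z, Measurable (lam z))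
    (hπ : P[Z | MeasurableSpace.comap X inferInstance] =ᵐ[P] fun ω => π₁ (X ω))
    (hρ : P[A | MeasurableSpace.comap X inferInstance] =ᵐ[P] fun ω => ρ (X ω))
    (hμ : P[(fun ω => M (Y ω) * (1 - A ω)) |
        MeasurableSpace.comap (fun ω => (Z ω, X ω)) inferInstance]
      =ᵐ[P] fun ω => μ (Z ω) (X ω))
    (hlam : P[A | MeasurableSpace.comap (fun ω => (Z ω, X ω)) inferInstance]
      =ᵐ[P] fun ω => lam (Z ω) (X ω))
    -- regularity: π₁ ∈ (c, 1−c) and δ^A nonzero (bounded away from 0)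
    (c : ℝ) (hc : 0 < c)
    (hπbd : ∀ x, c ≤ π₁ x ∧ π₁ x ≤ 1 - c)
    (hδA : ∀ x, c ≤ |lam 1 x - lam 0 x|)
    (hnuisbd : ∃ C, ∀ z x, |μ z x| ≤ C ∧ |lam z x| ≤ C ∧ |ρ x| ≤ C) :
    ∫ ω,
      (((μ 1 (X ω) - μ 0 (X ω)) / (lam 1 (X ω) - lam 0 (X ω))) * A ω
          - ∫ ω', ((μ 1 (X ω') - μ 0 (X ω')) / (lam 1 (X ω') - lam 0 (X ω'))) * ρ (X ω') ∂P)
        + (ρ (X ω) / (lam 1 (X ω) - lam 0 (X ω)))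
            * ((2 * Z ω - 1) / (Z ω * π₁ (X ω) + (1 - Z ω) * (1 - π₁ (X ω))))
            * (M (Y ω) * (1 - A ω)
                - (Z ω * μ 1 (X ω) + (1 - Z ω) * μ 0 (X ω))
                - (A ω - (Z ω * lam 1 (X ω) + (1 - Z ω) * lam 0 (X ω)))
                    * ((μ 1 (X ω) - μ 0 (X ω)) / (lam 1 (X ω) - lam 0 (X ω)))) ∂P
      = 0 := by
  classical
  obtain ⟨C₀, hC₀⟩ := hnuisbd
  obtain ⟨CM₀, hCM₀⟩ := hMbdd
  set C : ℝ := max C₀ 0 with hCdef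
  have hC0 : 0 ≤ C := le_max_right _ _
  have hC : ∀ z x, |μ z x| ≤ C ∧ |lam z x| ≤ C ∧ |ρ x| ≤ C := fun z x =>
    ⟨le_trans (hC₀ z x).1 (le_max_left _ _), le_trans (hC₀ z x).2.1 (le_max_left _ _),
      le_trans (hC₀ z x).2.2 (le_max_left _ _)⟩
  set CM : ℝ := max CM₀ 0 with hCMdef
  have hCM0 : 0 ≤ CM := le_max_right _ _
  have hCM : ∀ y, |M y| ≤ CM := fun y => le_trans (hCM₀ y) (le_max_left _ _)
  -- notation
  have hmX : (MeasurableSpace.comap X inferInstance) ≤ ‹MeasurableSpace Ω› := hX.comap_le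
  have hmZX : (MeasurableSpace.comap (fun ω => (Z ω, X ω)) inferInstance) ≤ ‹MeasurableSpace Ω› := (hZ.prodMk hX).comap_le
  have hXm : Measurable[(MeasurableSpace.comap X inferInstance)] X := measurable_iff_comap_le.mpr le_rfl
  have hpairm : Measurable[(MeasurableSpace.comap (fun ω => (Z ω, X ω)) inferInstance)] (fun ω => (Z ω, X ω)) := measurable_iff_comap_le.mpr le_rfl
  -- the functions
  set g : Ω → ℝ := fun ω => (μ 1 (X ω) - μ 0 (X ω)) / (lam 1 (X ω) - lam 0 (X ω)) with hgdef
  set w2 : Ω → ℝ := fun ω => (ρ (X ω) / (lam 1 (X ω) - lam 0 (X ω)))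
      * ((2 * Z ω - 1) / (Z ω * π₁ (X ω) + (1 - Z ω) * (1 - π₁ (X ω)))) with hw2def
  set μZ : Ω → ℝ := fun ω => Z ω * μ 1 (X ω) + (1 - Z ω) * μ 0 (X ω) with hmuZdef
  set lamZ : Ω → ℝ := fun ω => Z ω * lam 1 (X ω) + (1 - Z ω) * lam 0 (X ω) with hlamZdef
  set fM : Ω → ℝ := fun ω => M (Y ω) * (1 - A ω) with hfMdef
  set ρX : Ω → ℝ := fun ω => ρ (X ω) with hrhoXdef
  -- measurability
  have hgmX : Measurable[(MeasurableSpace.comap X inferInstance)] g :=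
    (((hμmeas 1).sub (hμmeas 0)).div ((hlammeas 1).sub (hlammeas 0))).comp hXm
  have hgm : Measurable g := hgmX.mono hmX le_rfl
  have hgmZX : Measurable[(MeasurableSpace.comap (fun ω => (Z ω, X ω)) inferInstance)] g := by
    have : Measurable (fun p : ℝ × 𝒳 => (μ 1 p.2 - μ 0 p.2) / (lam 1 p.2 - lam 0 p.2)) :=
      (((hμmeas 1).comp measurable_snd).sub ((hμmeas 0).comp measurable_snd)).div
        (((hlammeas 1).comp measurable_snd).sub ((hlammeas 0).comp measurable_snd))
    exact this.comp hpairm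
  have hw2m : Measurable[(MeasurableSpace.comap (fun ω => (Z ω, X ω)) inferInstance)] w2 := by
    have : Measurable (fun p : ℝ × 𝒳 => (ρ p.2 / (lam 1 p.2 - lam 0 p.2))
        * ((2 * p.1 - 1) / (p.1 * π₁ p.2 + (1 - p.1) * (1 - π₁ p.2)))) := by
      apply Measurable.mul
      · exact (hρmeas.comp measurable_snd).div
          (((hlammeas 1).comp measurable_snd).sub ((hlammeas 0).comp measurable_snd))
      · exact ((measurable_fst.const_mul 2).sub measurable_const).div
          ((measurable_fst.mul (hπmeas.comp measurable_snd)).add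
            ((measurable_const.sub measurable_fst).mul
              (measurable_const.sub (hπmeas.comp measurable_snd))))
    exact this.comp hpairm
  have hmuZm : Measurable[(MeasurableSpace.comap (fun ω => (Z ω, X ω)) inferInstance)] μZ := by
    have : Measurable (fun p : ℝ × 𝒳 => p.1 * μ 1 p.2 + (1 - p.1) * μ 0 p.2) :=
      (measurable_fst.mul ((hμmeas 1).comp measurable_snd)).add
        ((measurable_const.sub measurable_fst).mul ((hμmeas 0).comp measurable_snd))
    exact this.comp hpairm
  have hlamZm : Measurable[(MeasurableSpace.comap (fun ω => (Z ω, X ω)) inferInstance)] lamZ := by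
    have : Measurable (fun p : ℝ × 𝒳 => p.1 * lam 1 p.2 + (1 - p.1) * lam 0 p.2) :=
      (measurable_fst.mul ((hlammeas 1).comp measurable_snd)).add
        ((measurable_const.sub measurable_fst).mul ((hlammeas 0).comp measurable_snd))
    exact this.comp hpairm
  have hrhoXm : Measurable ρX := hρmeas.comp hX
  -- bounds
  have hδApos : ∀ x, (0:ℝ) < |lam 1 x - lam 0 x| := fun x => lt_of_lt_of_le hc (hδA x)
  have hgbd : ∀ ω, |g ω| ≤ 2 * C / c := by
    intro ω
    rw [hgdef, abs_div]
    refine div_le_div₀ (by linarith) ?_ hc (hδA _)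
    calc |μ 1 (X ω) - μ 0 (X ω)| ≤ |μ 1 (X ω)| + |μ 0 (X ω)| := abs_sub _ _
      _ ≤ 2 * C := by have := (hC 1 (X ω)).1; have := (hC 0 (X ω)).1; linarith
  have hw2bd : ∀ ω, |w2 ω| ≤ (C / c) * (1 / c) := by
    intro ω
    rw [hw2def, abs_mul]
    refine mul_le_mul ?_ ?_ (abs_nonneg _) (by positivity)
    · rw [abs_div]
      exact div_le_div₀ hC0 (hC 1 (X ω)).2.2 hc (hδA _)
    · rcases hZ01 ω with h | h <;> rw [h, abs_div]
      · have h1 : c ≤ 1 - π₁ (X ω) := by have := (hπbd (X ω)).2; linarith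
        have : |(0:ℝ) * π₁ (X ω) + (1 - 0) * (1 - π₁ (X ω))| = 1 - π₁ (X ω) := by
          rw [abs_of_nonneg] <;> [ring; linarith]
        rw [this]
        calc |2 * (0:ℝ) - 1| / (1 - π₁ (X ω)) = 1 / (1 - π₁ (X ω)) := by norm_num
          _ ≤ 1 / c := by
            apply one_div_le_one_div_of_le hc h1
      · have h1 : c ≤ π₁ (X ω) := (hπbd (X ω)).1
        have : |(1:ℝ) * π₁ (X ω) + (1 - 1) * (1 - π₁ (X ω))| = π₁ (X ω) := by
          rw [abs_of_nonneg] <;> [ring; linarith]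
        rw [this]
        calc |2 * (1:ℝ) - 1| / π₁ (X ω) = 1 / π₁ (X ω) := by norm_num
          _ ≤ 1 / c := one_div_le_one_div_of_le hc h1
  have hAbd : ∀ ω, |A ω| ≤ 1 := by
    intro ω; rcases hA01 ω with h | h <;> simp [h]
  have hZbd : ∀ ω, |Z ω| ≤ 1 := by
    intro ω; rcases hZ01 ω with h | h <;> simp [h]
  -- integrability helper
  have intb : ∀ {f : Ω → ℝ}, Measurable f → ∀ (D : ℝ), (∀ ω, |f ω| ≤ D) → Integrable f P := by
    intro f hf D hD
    exact ⟨hf.aestronglyMeasurable,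
      HasFiniteIntegral.of_bounded (C := D) (Filter.Eventually.of_forall fun ω => by
        rw [Real.norm_eq_abs]; exact hD ω)⟩
  have hAint : Integrable A P := intb hA 1 hAbd
  have hfMint : Integrable fM P := by
    refine intb (by exact (hMmeas.comp hY).mul (measurable_const.sub hA)) CM ?_
    intro ω
    rw [hfMdef, abs_mul]
    calc |M (Y ω)| * |1 - A ω| ≤ CM * 1 := by
          refine mul_le_mul (hCM _) ?_ (abs_nonneg _) hCM0
          rcases hA01 ω with h | h <;> simp [h]
      _ = CM := mul_one _
  -- conditional expectation versions
  have hμZver : P[fM|(MeasurableSpace.comap (fun ω => (Z ω, X ω)) inferInstance)] =ᵐ[P] μZ := by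
    refine hμ.trans (Filter.Eventually.of_forall fun ω => ?_)
    rcases hZ01 ω with h | h <;> simp [hmuZdef, h]
  have hlamZver : P[A|(MeasurableSpace.comap (fun ω => (Z ω, X ω)) inferInstance)] =ᵐ[P] lamZ := by
    refine hlam.trans (Filter.Eventually.of_forall fun ω => ?_)
    rcases hZ01 ω with h | h <;> simp [hlamZdef, h]
  -- the four pieces
  set h : ℝ := ∫ ω', g ω' * ρ (X ω') ∂P with hhdef
  set T1 : Ω → ℝ := fun ω => g ω * (A ω - ρX ω) with hT1def
  set T2 : Ω → ℝ := fun ω => g ω * ρX ω - h with hT2def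
  set T3 : Ω → ℝ := fun ω => w2 ω * (fM ω - μZ ω) with hT3def
  set T4 : Ω → ℝ := fun ω => (-(w2 ω * g ω)) * (A ω - lamZ ω) with hT4def
  have hT1zero : ∫ ω, T1 ω ∂P = 0 :=
    key_zero P hmX hgmX.stronglyMeasurable
      ⟨2 * C / c, fun ω => by rw [Real.norm_eq_abs]; exact hgbd ω⟩ hAint hρ
  have hT3zero : ∫ ω, T3 ω ∂P = 0 :=
    key_zero P hmZX hw2m.stronglyMeasurable
      ⟨(C / c) * (1 / c), fun ω => by rw [Real.norm_eq_abs]; exact hw2bd ω⟩ hfMint hμZver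
  have hT4zero : ∫ ω, T4 ω ∂P = 0 :=
    key_zero P hmZX ((hw2m.mul hgmZX).neg).stronglyMeasurable
      ⟨(C / c) * (1 / c) * (2 * C / c), fun ω => by
        rw [Real.norm_eq_abs, abs_neg, abs_mul]
        exact mul_le_mul (hw2bd ω) (hgbd ω) (abs_nonneg _)
          (by positivity)⟩ hAint hlamZver
  have hgρint : Integrable (fun ω => g ω * ρX ω) P := by
    refine intb (hgm.mul hrhoXm) ((2 * C / c) * C) fun ω => ?_
    rw [abs_mul]
    exact mul_le_mul (hgbd ω) (hC 1 (X ω)).2.2 (abs_nonneg _) (by positivity)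
  have hT2zero : ∫ ω, T2 ω ∂P = 0 := by
    rw [hT2def]
    rw [integral_sub hgρint (integrable_const h), integral_const, probReal_univ]
    simp [hhdef, hrhoXdef]
  have hT1int : Integrable T1 P := by
    refine intb (hgm.mul (hA.sub hrhoXm)) ((2 * C / c) * (1 + C)) fun ω => ?_
    rw [hT1def, abs_mul]
    refine mul_le_mul (hgbd ω) ?_ (abs_nonneg _) (by positivity)
    calc |A ω - ρX ω| ≤ |A ω| + |ρX ω| := abs_sub _ _
      _ ≤ 1 + C := add_le_add (hAbd ω) (hC 1 (X ω)).2.2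
  have hT2int : Integrable T2 P := hgρint.sub (integrable_const h)
  have hmuZbd : ∀ ω, |μZ ω| ≤ C := by
    intro ω
    rcases hZ01 ω with hh | hh <;> simp only [hmuZdef, hh] <;> norm_num
    · exact (hC 0 (X ω)).1
    · exact (hC 1 (X ω)).1
  have hlamZbd : ∀ ω, |lamZ ω| ≤ C := by
    intro ω
    rcases hZ01 ω with hh | hh <;> simp only [hlamZdef, hh] <;> norm_num
    · exact (hC 0 (X ω)).2.1
    · exact (hC 1 (X ω)).2.1
  have hT3int : Integrable T3 P := by
    refine intb ((hw2m.mono hmZX le_rfl).mul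
      (((hMmeas.comp hY).mul (measurable_const.sub hA)).sub (hmuZm.mono hmZX le_rfl)))
      ((C / c) * (1 / c) * (CM + C)) fun ω => ?_
    rw [hT3def, abs_mul]
    refine mul_le_mul (hw2bd ω) ?_ (abs_nonneg _) (by positivity)
    calc |fM ω - μZ ω| ≤ |fM ω| + |μZ ω| := abs_sub _ _
      _ ≤ CM + C := by
        refine add_le_add ?_ (hmuZbd ω)
        rw [hfMdef, abs_mul]
        calc |M (Y ω)| * |1 - A ω| ≤ CM * 1 := by
              refine mul_le_mul (hCM _) ?_ (abs_nonneg _) hCM0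
              rcases hA01 ω with hh | hh <;> simp [hh]
          _ = CM := mul_one _
  have hT4int : Integrable T4 P := by
    refine intb (((hw2m.mono hmZX le_rfl).mul hgm).neg.mul (hA.sub (hlamZm.mono hmZX le_rfl)))
      ((C / c) * (1 / c) * (2 * C / c) * (1 + C)) fun ω => ?_
    rw [hT4def, abs_mul, abs_neg, abs_mul]
    refine mul_le_mul (mul_le_mul (hw2bd ω) (hgbd ω) (abs_nonneg _) (by positivity)) ?_
      (abs_nonneg _) (by positivity)
    calc |A ω - lamZ ω| ≤ |A ω| + |lamZ ω| := abs_sub _ _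
      _ ≤ 1 + C := add_le_add (hAbd ω) (hlamZbd ω)
  show ∫ ω, (g ω * A ω - h) + w2 ω * (fM ω - μZ ω - (A ω - lamZ ω) * g ω) ∂P = 0
  have hdecomp : ∀ ω, (g ω * A ω - h) + w2 ω * (fM ω - μZ ω - (A ω - lamZ ω) * g ω)
      = T1 ω + (T2 ω + (T3 ω + T4 ω)) := by
    intro ω
    simp only [hT1def, hT2def, hT3def, hT4def]
    ring
  have h34 : Integrable (fun ω => T3 ω + T4 ω) P := hT3int.add hT4int
  have h234 : Integrable (fun ω => T2 ω + (T3 ω + T4 ω)) P := hT2int.add h34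
  rw [integral_congr_ae (Filter.Eventually.of_forall hdecomp),
    integral_add hT1int h234, integral_add hT2int h34,
    integral_add hT3int hT4int, hT1zero, hT2zero, hT3zero, hT4zero]
  norm_num
end
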